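/- The quantum f-relative entropy is convex in its second argument: S_f(ρ ‖ λσ₁ + (1-λ)σ₂) ≤ λ S_f(ρ‖σ₁) + (1-λ) S_f(ρ‖σ₂) for λ ∈ [0,1] and strictly positive ρ, σ₁, σ₂. -/

import Mathlib

open Matrix Kronecker
open scoped ComplexOrder

noncomputable def applyFun {n : Type*} [Fintype n] [DecidableEq n]
    (f : ℝ → ℝ) (A : Matrix n n ℂ) : Matrix n n ℂ := by
  classical exact
    if hA : A.IsHermitian then
      (hA.eigenvectorUnitary : Matrix n n ℂ) *
        Matrix.diagonal (fun i => (f (hA.eigenvalues i) : ℂ)) *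
        (star (hA.eigenvectorUnitary : Matrix n n ℂ))
    else 0

noncomputable def msqrt {n : Type*} [Fintype n] [DecidableEq n]
    (A : Matrix n n ℂ) : Matrix n n ℂ := by
  classical exact if h : A.PosSemidef then
    (h.1.eigenvectorUnitary : Matrix n n ℂ) *
      Matrix.diagonal ((↑) ∘ (Real.sqrt ·) ∘ h.1.eigenvalues) *
      (star (h.1.eigenvectorUnitary : Matrix n n ℂ)) else 0

def vecOf {m n : Type*} (A : Matrix m n ℂ) : m × n → ℂ := fun p => A p.1 p.2

noncomputable def Srel {n : Type*} [Fintype n] [DecidableEq n]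
    (f : ℝ → ℝ) (ρ σ : Matrix n n ℂ) : ℝ :=
  (star (vecOf (msqrt ρ)) ⬝ᵥ (applyFun f (σ ⊗ₖ (ρ⁻¹)ᵀ) *ᵥ vecOf (msqrt ρ))).re

def OperatorConvexOn (I : Set ℝ) (f : ℝ → ℝ) : Prop :=
  ∀ (n : ℕ) (A B : Matrix (Fin n) (Fin n) ℂ) (hA : A.IsHermitian) (hB : B.IsHermitian),
    (∀ i, hA.eigenvalues i ∈ I) → (∀ i, hB.eigenvalues i ∈ I) →
    ∀ lam : ℝ, 0 ≤ lam → lam ≤ 1 →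
      ((lam : ℂ) • applyFun f A + ((1 - lam : ℝ) : ℂ) • applyFun f B -
        applyFun f ((lam : ℂ) • A + ((1 - lam : ℝ) : ℂ) • B)).PosSemidef

noncomputable def entf {n : Type*} [Fintype n] [DecidableEq n]
    (f : ℝ → ℝ) (ρ : Matrix n n ℂ) : ℝ :=
  -(Matrix.trace (ρ * applyFun f ρ⁻¹)).re

noncomputable def ptraceB {α β : Type*} [Fintype β]
    (M : Matrix (α × β) (α × β) ℂ) : Matrix α α ℂ :=
  Matrix.of fun i j => ∑ k, M (i, k) (j, k)

noncomputable def ptraceA {α β : Type*} [Fintype α]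
    (M : Matrix (α × β) (α × β) ℂ) : Matrix β β ℂ :=
  Matrix.of fun i j => ∑ k, M (k, i) (k, j)

def NonAffineOn (I : Set ℝ) (f : ℝ → ℝ) : Prop :=
  ¬ ∃ c b : ℝ, ∀ t ∈ I, f t = c * t + b


section Aux
open Polynomial
variable {m n : Type*} [Fintype n] [DecidableEq n] [Fintype m] [DecidableEq m]

set_option linter.unusedSectionVars false

lemma myAeval_diagonal (p : ℝ[X]) (d : n → ℝ) :
    aeval (Matrix.diagonal (fun i => (d i : ℂ))) p
      = Matrix.diagonal (fun i => ((p.eval (d i) : ℝ) : ℂ)) := by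
  induction p using Polynomial.induction_on' with
  | add p q hp hq =>
      simp [map_add, hp, hq, diagonal_add, Complex.ofReal_add]
  | monomial k a =>
      simp only [aeval_monomial, diagonal_pow, eval_monomial]
      rw [Matrix.algebraMap_eq_diagonal, diagonal_mul_diagonal]
      congr 1; funext i; push_cast
      simp [Pi.algebraMap_apply, mul_comm]

lemma myAeval_conj (p : ℝ[X]) (U V A : Matrix n n ℂ) (hUV : U * V = 1) (hVU : V * U = 1) :
    aeval (U * A * V) p = U * aeval A p * V := by
  have hpow : ∀ k : ℕ, (U * A * V) ^ k = U * A ^ k * V := by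
    intro k
    induction k with
    | zero => simp [hUV]
    | succ k ih =>
        rw [pow_succ, ih, pow_succ]
        have h2 : U * A ^ k * V * (U * A * V) = U * A ^ k * ((V * U) * A) * V := by
          simp only [mul_assoc]
        rw [h2, hVU, one_mul, mul_assoc U]
  induction p using Polynomial.induction_on' with
  | add p q hp hq => simp [map_add, hp, hq, mul_add, add_mul]
  | monomial k a =>
      simp only [aeval_monomial, hpow]
      have hc := Algebra.commutes a U
      simp only [← mul_assoc]
      rw [← hc]

lemma applyFun_eq_of_decomp (f : ℝ → ℝ) {A : Matrix n n ℂ} (hA : A.IsHermitian)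
    (U : Matrix n n ℂ) (hU : U ∈ Matrix.unitaryGroup n ℂ) (d : n → ℝ)
    (hdec : A = U * Matrix.diagonal (fun i => (d i : ℂ)) * star U) :
    applyFun f A = U * Matrix.diagonal (fun i => (f (d i) : ℂ)) * star U := by
  classical
  set S : Finset ℝ := Finset.image d Finset.univ ∪ Finset.image hA.eigenvalues Finset.univ with hS
  set p := Lagrange.interpolate S id f with hpdef
  have hp : ∀ t ∈ S, p.eval t = f t := by
    intro t ht
    exact Lagrange.eval_interpolate_at_node (r := f) (Set.injOn_id _) ht
  have hd : ∀ i, p.eval (d i) = f (d i) := fun i => hp _ (by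
    simp [hS, Finset.mem_union, Finset.mem_image])
  have hev : ∀ i, p.eval (hA.eigenvalues i) = f (hA.eigenvalues i) := fun i => hp _ (by
    simp [hS, Finset.mem_union, Finset.mem_image])
  have h1 : aeval A p = U * Matrix.diagonal (fun i => (f (d i) : ℂ)) * star U := by
    rw [hdec, myAeval_conj _ _ _ _ (mem_unitaryGroup_iff.mp hU) (mem_unitaryGroup_iff'.mp hU),
      myAeval_diagonal]
    simp only [hd]
  have hUe := (hA.eigenvectorUnitary).2
  have h2 : aeval A p = (hA.eigenvectorUnitary : Matrix n n ℂ) *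
      Matrix.diagonal (fun i => (f (hA.eigenvalues i) : ℂ)) *
      (star (hA.eigenvectorUnitary : Matrix n n ℂ)) := by
    conv_lhs => rw [hA.spectral_theorem.trans (Unitary.conjStarAlgAut_apply ..)]
    rw [myAeval_conj _ _ _ _ (mem_unitaryGroup_iff.mp hUe) (mem_unitaryGroup_iff'.mp hUe)]
    have : Matrix.diagonal (RCLike.ofReal ∘ hA.eigenvalues)
        = Matrix.diagonal (fun i => ((hA.eigenvalues i : ℝ) : ℂ)) := rfl
    rw [this, myAeval_diagonal]
    simp only [hev]
  rw [applyFun, dif_pos hA, ← h2, h1]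

lemma submatrix_unitary (U : Matrix n n ℂ) (hU : U ∈ Matrix.unitaryGroup n ℂ) (e : m ≃ n) :
    U.submatrix e e ∈ Matrix.unitaryGroup m ℂ := by
  rw [Matrix.mem_unitaryGroup_iff]
  rw [Matrix.star_eq_conjTranspose, Matrix.conjTranspose_submatrix,
    Matrix.submatrix_mul_equiv, ← Matrix.star_eq_conjTranspose,
    Matrix.mem_unitaryGroup_iff.mp hU, Matrix.submatrix_one_equiv]


lemma submatrix_mul_mul (P Q R : Matrix n n ℂ) (e : m ≃ n) :
    (P * Q * R).submatrix e e = P.submatrix e e * Q.submatrix e e * R.submatrix e e := by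
  rw [Matrix.submatrix_mul_equiv, Matrix.submatrix_mul_equiv]

lemma star_submatrix (U : Matrix n n ℂ) (e : m ≃ n) :
    (star U).submatrix e e = star (U.submatrix e e) := by
  rw [Matrix.star_eq_conjTranspose, Matrix.star_eq_conjTranspose,
    Matrix.conjTranspose_submatrix]

lemma applyFun_submatrix (f : ℝ → ℝ) {A : Matrix n n ℂ} (hA : A.IsHermitian) (e : m ≃ n) :
    applyFun f (A.submatrix e e) = (applyFun f A).submatrix e e := by
  have hUe := (hA.eigenvectorUnitary).2
  have hdec := hA.spectral_theorem.trans (Unitary.conjStarAlgAut_apply ..)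
  have hdiag : ∀ g : ℝ → ℝ,
      (Matrix.diagonal (fun i => ((g (hA.eigenvalues i) : ℝ) : ℂ))).submatrix e e
        = Matrix.diagonal (fun i => ((g (hA.eigenvalues (e i)) : ℝ) : ℂ)) := by
    intro g
    rw [show (fun i => ((g (hA.eigenvalues (e i)) : ℝ) : ℂ))
        = (fun i => ((g (hA.eigenvalues i) : ℝ) : ℂ)) ∘ e from rfl,
      Matrix.submatrix_diagonal_equiv]
  have hsub : A.submatrix e e
      = ((hA.eigenvectorUnitary : Matrix n n ℂ).submatrix e e) *
        Matrix.diagonal (fun i => ((hA.eigenvalues (e i) : ℝ) : ℂ)) *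
        star ((hA.eigenvectorUnitary : Matrix n n ℂ).submatrix e e) := by
    conv_lhs => rw [hdec]
    rw [submatrix_mul_mul, star_submatrix]
    congr 2
    rw [show (RCLike.ofReal ∘ hA.eigenvalues : n → ℂ)
        = fun i => ((hA.eigenvalues i : ℝ) : ℂ) from rfl,
      show (fun i => ((hA.eigenvalues (e i) : ℝ) : ℂ))
        = (fun i => ((hA.eigenvalues i : ℝ) : ℂ)) ∘ e from rfl,
      Matrix.submatrix_diagonal_equiv]
  rw [applyFun_eq_of_decomp f (hA.submatrix e) _ (submatrix_unitary _ hUe e) _ hsub]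
  have hdec' : A = (hA.eigenvectorUnitary : Matrix n n ℂ) *
      Matrix.diagonal (fun i => ((hA.eigenvalues i : ℝ) : ℂ)) *
      star (hA.eigenvectorUnitary : Matrix n n ℂ) := hdec
  rw [applyFun_eq_of_decomp f hA _ hUe _ hdec']
  rw [submatrix_mul_mul, star_submatrix, hdiag f]

lemma posDef_conj_unitary {P : Matrix n n ℂ} (hP : P.PosDef) (W : Matrix n n ℂ)
    (hW : W ∈ Matrix.unitaryGroup n ℂ) : (W * P * star W).PosDef := by
  refine Matrix.PosDef.of_dotProduct_mulVec_pos ?_ ?_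
  · rw [Matrix.IsHermitian]
    rw [Matrix.star_eq_conjTranspose]
    simp [Matrix.conjTranspose_mul, Matrix.mul_assoc, hP.1.eq]
  · intro x hx
    have hy : star W *ᵥ x ≠ 0 := by
      intro h
      apply hx
      have : W *ᵥ (star W *ᵥ x) = 0 := by rw [h, Matrix.mulVec_zero]
      rwa [Matrix.mulVec_mulVec, Matrix.mem_unitaryGroup_iff.mp hW, Matrix.one_mulVec] at this
    have key : star x ⬝ᵥ ((W * P * star W) *ᵥ x)
        = star (star W *ᵥ x) ⬝ᵥ (P *ᵥ (star W *ᵥ x)) := by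
      rw [Matrix.star_mulVec, Matrix.star_eq_conjTranspose,
        Matrix.conjTranspose_conjTranspose, ← Matrix.mulVec_mulVec,
        ← Matrix.mulVec_mulVec, Matrix.dotProduct_mulVec (star x)]
    rw [key]
    exact hP.dotProduct_mulVec_pos hy

lemma star_kronecker (A : Matrix m m ℂ) (B : Matrix n n ℂ) :
    star (A ⊗ₖ B) = star A ⊗ₖ star B := by
  ext i j
  simp [Matrix.star_apply, Matrix.kroneckerMap_apply, star_mul']

lemma kron_unitary {U : Matrix m m ℂ} {V : Matrix n n ℂ}
    (hU : U ∈ Matrix.unitaryGroup m ℂ) (hV : V ∈ Matrix.unitaryGroup n ℂ) :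
    U ⊗ₖ V ∈ Matrix.unitaryGroup (m × n) ℂ := by
  rw [Matrix.mem_unitaryGroup_iff, star_kronecker, ← Matrix.mul_kronecker_mul,
    Matrix.mem_unitaryGroup_iff.mp hU, Matrix.mem_unitaryGroup_iff.mp hV,
    Matrix.one_kronecker_one]

lemma posDef_kronecker {A : Matrix m m ℂ} {B : Matrix n n ℂ}
    (hA : A.PosDef) (hB : B.PosDef) : (A ⊗ₖ B).PosDef := by
  have hAdec := hA.1.spectral_theorem.trans (Unitary.conjStarAlgAut_apply ..)
  have hBdec := hB.1.spectral_theorem.trans (Unitary.conjStarAlgAut_apply ..)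
  have hkey : A ⊗ₖ B = (hA.1.eigenvectorUnitary : Matrix m m ℂ) ⊗ₖ
      (hB.1.eigenvectorUnitary : Matrix n n ℂ) *
      (Matrix.diagonal (RCLike.ofReal ∘ hA.1.eigenvalues) ⊗ₖ
        Matrix.diagonal (RCLike.ofReal ∘ hB.1.eigenvalues)) *
      star ((hA.1.eigenvectorUnitary : Matrix m m ℂ) ⊗ₖ
        (hB.1.eigenvectorUnitary : Matrix n n ℂ)) := by
    rw [star_kronecker, ← Matrix.mul_kronecker_mul, ← Matrix.mul_kronecker_mul,
      ← hAdec, ← hBdec]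
  rw [hkey]
  apply posDef_conj_unitary _ _ (kron_unitary (hA.1.eigenvectorUnitary).2
    (hB.1.eigenvectorUnitary).2)
  rw [Matrix.diagonal_kronecker_diagonal]
  rw [Matrix.posDef_diagonal_iff]
  rintro ⟨i, j⟩
  simp only [Function.comp_apply]
  rw [← RCLike.ofReal_mul, RCLike.ofReal_pos]
  exact mul_pos (hA.eigenvalues_pos i) (hB.eigenvalues_pos j)

lemma posDef_submatrix_equiv {M : Matrix n n ℂ} (hM : M.PosDef) (e : m ≃ n) :
    (M.submatrix e e).PosDef := by
  refine Matrix.PosDef.of_dotProduct_mulVec_pos (hM.1.submatrix e) fun ⦃x⦄ hx => ?_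
  rw [Matrix.submatrix_mulVec_equiv]
  have hy : (x ∘ e.symm) ≠ 0 := by
    intro h
    apply hx
    funext i
    have := congrFun h (e i)
    simpa using this
  have hq : star x ⬝ᵥ ((M *ᵥ (x ∘ e.symm)) ∘ e)
      = star (x ∘ e.symm) ⬝ᵥ (M *ᵥ (x ∘ e.symm)) := by
    rw [show star x ⬝ᵥ ((M *ᵥ (x ∘ e.symm)) ∘ e)
        = ∑ i, (fun j => star ((x ∘ e.symm) j) * (M *ᵥ (x ∘ e.symm)) j) (e i) from by
      simp [dotProduct, Function.comp]]
    rw [Equiv.sum_comp e (fun j => star ((x ∘ e.symm) j) * (M *ᵥ (x ∘ e.symm)) j)]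
    rfl
  rw [hq]
  exact hM.dotProduct_mulVec_pos hy

lemma hermitian_real_smul (c : ℝ) {A : Matrix n n ℂ} (hA : A.IsHermitian) :
    ((c : ℂ) • A).IsHermitian := by
  rw [Matrix.IsHermitian, Matrix.conjTranspose_smul, hA.eq, Complex.star_def,
    Complex.conj_ofReal]


end Aux

/-- convexity of the quantum f-relative entropy in its second argument. -/
theorem Srel_convex_second {d : ℕ} (f : ℝ → ℝ)
    (hf : OperatorConvexOn (Set.Ioi 0) f)
    (ρ σ₁ σ₂ : Matrix (Fin d) (Fin d) ℂ)
    (hρ : ρ.PosDef) (h1 : σ₁.PosDef) (h2 : σ₂.PosDef)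
    (lam : ℝ) (hlam0 : 0 ≤ lam) (hlam1 : lam ≤ 1) :
    Srel f ρ ((lam : ℂ) • σ₁ + ((1 - lam : ℝ) : ℂ) • σ₂) ≤
      lam * Srel f ρ σ₁ + (1 - lam) * Srel f ρ σ₂ := by
  classical
  have hτ : ((ρ⁻¹)ᵀ).PosDef := hρ.inv.transpose
  set v : (Fin d × Fin d) → ℂ := vecOf (msqrt ρ) with hv
  set M₁ : Matrix (Fin d × Fin d) (Fin d × Fin d) ℂ := σ₁ ⊗ₖ (ρ⁻¹)ᵀ with hM₁def
  set M₂ : Matrix (Fin d × Fin d) (Fin d × Fin d) ℂ := σ₂ ⊗ₖ (ρ⁻¹)ᵀ with hM₂def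
  have hM₁ : M₁.PosDef := posDef_kronecker h1 hτ
  have hM₂ : M₂.PosDef := posDef_kronecker h2 hτ
  set Mx : Matrix (Fin d × Fin d) (Fin d × Fin d) ℂ :=
    (lam : ℂ) • M₁ + ((1 - lam : ℝ) : ℂ) • M₂ with hMxdef
  have hMix : ((lam : ℂ) • σ₁ + ((1 - lam : ℝ) : ℂ) • σ₂) ⊗ₖ (ρ⁻¹)ᵀ = Mx := by
    rw [hMxdef, hM₁def, hM₂def, Matrix.add_kronecker, Matrix.smul_kronecker,
      Matrix.smul_kronecker]
  have hMxH : Mx.IsHermitian :=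
    (hermitian_real_smul lam hM₁.1).add (hermitian_real_smul (1 - lam) hM₂.1)
  set e : Fin d × Fin d ≃ Fin (d * d) := finProdFinEquiv with he
  have hA' : (M₁.submatrix e.symm e.symm).PosDef := posDef_submatrix_equiv hM₁ e.symm
  have hB' : (M₂.submatrix e.symm e.symm).PosDef := posDef_submatrix_equiv hM₂ e.symm
  have key := hf (d * d) (M₁.submatrix e.symm e.symm) (M₂.submatrix e.symm e.symm)
    hA'.1 hB'.1 (fun i => hA'.eigenvalues_pos i) (fun i => hB'.eigenvalues_pos i)
    lam hlam0 hlam1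
  rw [applyFun_submatrix f hM₁.1 e.symm, applyFun_submatrix f hM₂.1 e.symm] at key
  have hcomb : (lam : ℂ) • M₁.submatrix e.symm e.symm
      + ((1 - lam : ℝ) : ℂ) • M₂.submatrix e.symm e.symm = Mx.submatrix e.symm e.symm := by
    rw [hMxdef]; ext i j; simp [Matrix.submatrix_apply]
  rw [hcomb, applyFun_submatrix f hMxH e.symm] at key
  set N : Matrix (Fin d × Fin d) (Fin d × Fin d) ℂ :=
    (lam : ℂ) • applyFun f M₁ + ((1 - lam : ℝ) : ℂ) • applyFun f M₂ - applyFun f Mx with hN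
  have hNsub : (lam : ℂ) • (applyFun f M₁).submatrix e.symm e.symm
      + ((1 - lam : ℝ) : ℂ) • (applyFun f M₂).submatrix e.symm e.symm
      - (applyFun f Mx).submatrix e.symm e.symm = N.submatrix e.symm e.symm := by
    ext i j; simp [hN, Matrix.submatrix_apply]
  rw [hNsub] at key
  have hNpsd : N.PosSemidef := by
    have h2' := key.submatrix e
    rwa [Matrix.submatrix_submatrix, Equiv.symm_comp_self, Matrix.submatrix_id_id] at h2'
  have h0 : 0 ≤ (star v ⬝ᵥ N *ᵥ v).re := by
    have := (Complex.le_def.mp (hNpsd.dotProduct_mulVec_nonneg v)).1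
    simpa using this
  have hexp : star v ⬝ᵥ N *ᵥ v
      = (lam : ℂ) * (star v ⬝ᵥ applyFun f M₁ *ᵥ v)
        + ((1 - lam : ℝ) : ℂ) * (star v ⬝ᵥ applyFun f M₂ *ᵥ v)
        - star v ⬝ᵥ applyFun f Mx *ᵥ v := by
    rw [hN, Matrix.sub_mulVec, Matrix.add_mulVec, Matrix.smul_mulVec,
      Matrix.smul_mulVec, dotProduct_sub, dotProduct_add,
      dotProduct_smul, dotProduct_smul, smul_eq_mul, smul_eq_mul]
  have hre : (star v ⬝ᵥ N *ᵥ v).re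
      = lam * (star v ⬝ᵥ applyFun f M₁ *ᵥ v).re
        + (1 - lam) * (star v ⬝ᵥ applyFun f M₂ *ᵥ v).re
        - (star v ⬝ᵥ applyFun f Mx *ᵥ v).re := by
    rw [hexp, Complex.sub_re, Complex.add_re, Complex.re_ofReal_mul, Complex.re_ofReal_mul]
  have hS1 : Srel f ρ σ₁ = (star v ⬝ᵥ applyFun f M₁ *ᵥ v).re := rfl
  have hS2 : Srel f ρ σ₂ = (star v ⬝ᵥ applyFun f M₂ *ᵥ v).re := rfl
  have hSx : Srel f ρ ((lam : ℂ) • σ₁ + ((1 - lam : ℝ) : ℂ) • σ₂)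
      = (star v ⬝ᵥ applyFun f Mx *ᵥ v).re := by
    rw [Srel, hMix]
  rw [hS1, hS2, hSx]
  rw [hre] at h0
  linarith
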